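/- The networked system (I_n⊗I)ẋ = (I_n⊗A − L⊗BC)x achieves synchronization (i.e., x_i(t) − x_j(t) → 0 for all i,j and all initial conditions) if and only if A − λ_k BC is Hurwitz for every nonzero eigenvalue λ_k of L, where L is a connected undirected graph Laplacian. -/

import Mathlib

open Matrix Filter NormedSpace Kronecker

variable {ι : Type*} [Fintype ι] [DecidableEq ι]

section Generic
variable (𝕜 : Type*) [RCLike 𝕜]

open scoped Matrix.Norms.Operator in
noncomputable def mulVecCLM (v : ι → 𝕜) : Matrix ι ι 𝕜 →L[𝕜] (ι → 𝕜) := by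
  letI : SeminormedRing (Matrix ι ι 𝕜) := Matrix.linftyOpSemiNormedRing
  letI : NormedRing (Matrix ι ι 𝕜) := Matrix.linftyOpNormedRing
  letI : NormedAlgebra 𝕜 (Matrix ι ι 𝕜) := Matrix.linftyOpNormedAlgebra
  exact LinearMap.toContinuousLinearMap
    { toFun := fun X => X *ᵥ v
      map_add' := fun X Y => Matrix.add_mulVec X Y v
      map_smul' := fun c X => smul_mulVec c X v }

open scoped Matrix.Norms.Operator in
lemma exp_mulVec_eq_tsum (M : Matrix ι ι 𝕜) (v : ι → 𝕜) :
    exp M *ᵥ v = ∑' k : ℕ, ((k.factorial : 𝕜)⁻¹) • (M ^ k *ᵥ v) := by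
  letI : SeminormedRing (Matrix ι ι 𝕜) := Matrix.linftyOpSemiNormedRing
  letI : NormedRing (Matrix ι ι 𝕜) := Matrix.linftyOpNormedRing
  letI : NormedAlgebra 𝕜 (Matrix ι ι 𝕜) := Matrix.linftyOpNormedAlgebra
  have hs : Summable (fun k : ℕ => ((k.factorial : 𝕜)⁻¹) • M ^ k) :=
    expSeries_summable' (𝕂 := 𝕜) M
  have h1 : exp M *ᵥ v = mulVecCLM 𝕜 v (exp M) := rfl
  rw [h1, exp_eq_tsum (𝕂 := 𝕜), ContinuousLinearMap.map_tsum _ hs]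
  congr 1; funext k
  simp [mulVecCLM, Matrix.mulVec_smul]

open scoped Matrix.Norms.Operator in
lemma summable_exp_series_mulVec (M : Matrix ι ι 𝕜) (v : ι → 𝕜) :
    Summable (fun k : ℕ => ((k.factorial : 𝕜)⁻¹) • (M ^ k *ᵥ v)) := by
  letI : SeminormedRing (Matrix ι ι 𝕜) := Matrix.linftyOpSemiNormedRing
  letI : NormedRing (Matrix ι ι 𝕜) := Matrix.linftyOpNormedRing
  letI : NormedAlgebra 𝕜 (Matrix ι ι 𝕜) := Matrix.linftyOpNormedAlgebra
  have hs : Summable (fun k : ℕ => ((k.factorial : 𝕜)⁻¹) • M ^ k) :=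
    expSeries_summable' (𝕂 := 𝕜) M
  have h2 := hs.map (mulVecCLM 𝕜 v).toLinearMap.toAddMonoidHom (mulVecCLM 𝕜 v).continuous
  have h3 : ((fun X : Matrix ι ι 𝕜 => X *ᵥ v) ∘ fun k : ℕ => ((k.factorial : 𝕜)⁻¹) • M ^ k)
      = fun k : ℕ => ((k.factorial : 𝕜)⁻¹) • (M ^ k *ᵥ v) := by
    funext k
    simp [Function.comp, smul_mulVec]
  simpa [mulVecCLM, h3] using h2

end Generic

lemma exp_smul_mulVec_eigen {M : Matrix ι ι ℂ} {μ : ℂ} {z : ι → ℂ}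
    (hz : M *ᵥ z = μ • z) (c : ℂ) :
    exp (c • M) *ᵥ z = Complex.exp (c * μ) • z := by
  have hpow : ∀ k : ℕ, (c • M) ^ k *ᵥ z = (c * μ) ^ k • z := by
    intro k
    induction k with
    | zero => simp
    | succ k ih =>
      have h1 : (c • M) *ᵥ z = (c * μ) • z := by
        rw [smul_mulVec, hz, smul_smul]
      rw [pow_succ, ← Matrix.mulVec_mulVec, h1, Matrix.mulVec_smul, ih, smul_smul,
        ← pow_succ']
  rw [exp_mulVec_eq_tsum ℂ]
  simp_rw [hpow, smul_smul]
  rw [Summable.tsum_smul_const ?_]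
  · congr 1
    rw [Complex.exp_eq_exp_ℂ, exp_eq_tsum (𝕂 := ℂ)]
    simp [smul_eq_mul]
  · simpa [smul_eq_mul] using expSeries_summable' (𝕂 := ℂ) (c * μ)

lemma exp_smul_mulVec_trunc {N : Matrix ι ι ℂ} {z : ι → ℂ} {K : ℕ}
    (hz : N ^ K *ᵥ z = 0) (c : ℂ) :
    exp (c • N) *ᵥ z
      = ∑ j ∈ Finset.range K, ((j.factorial : ℂ)⁻¹ * c ^ j) • (N ^ j *ᵥ z) := by
  rw [exp_mulVec_eq_tsum ℂ]
  rw [tsum_eq_sum (s := Finset.range K)]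
  · apply Finset.sum_congr rfl
    intro j _
    rw [smul_pow, smul_mulVec, smul_smul]
  · intro k hk
    rw [Finset.mem_range, not_lt] at hk
    have : N ^ k *ᵥ z = 0 := by
      have : N ^ k = N ^ (k - K) * N ^ K := by rw [← pow_add]; congr 1; omega
      rw [this, ← Matrix.mulVec_mulVec, hz, Matrix.mulVec_zero]
    rw [smul_pow, smul_mulVec, this, smul_zero, smul_zero]

open scoped Matrix.Norms.Operator in
lemma exp_smul_one (a : ℂ) :
    exp (a • (1 : Matrix ι ι ℂ)) = Complex.exp a • (1 : Matrix ι ι ℂ) := by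
  letI : SeminormedRing (Matrix ι ι ℂ) := Matrix.linftyOpSemiNormedRing
  letI : NormedRing (Matrix ι ι ℂ) := Matrix.linftyOpNormedRing
  letI : NormedAlgebra ℂ (Matrix ι ι ℂ) := Matrix.linftyOpNormedAlgebra
  have h1 : a • (1 : Matrix ι ι ℂ) = algebraMap ℂ (Matrix ι ι ℂ) a :=
    (Algebra.algebraMap_eq_smul_one a).symm
  rw [h1]; erw [← algebraMap_exp_comm (𝕂 := ℂ) (𝔸 := Matrix ι ι ℂ) a]; rw [Algebra.algebraMap_eq_smul_one, Complex.exp_eq_exp_ℂ]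

lemma exp_smul_shift (M : Matrix ι ι ℂ) (μ c : ℂ) :
    exp (c • M) = Complex.exp (c * μ) • exp (c • (M - μ • (1 : Matrix ι ι ℂ))) := by
  have hdec : c • M = (c * μ) • (1 : Matrix ι ι ℂ) + c • (M - μ • (1 : Matrix ι ι ℂ)) := by
    module
  have hcomm : Commute ((c * μ) • (1 : Matrix ι ι ℂ)) (c • (M - μ • (1 : Matrix ι ι ℂ))) :=
    ((Commute.one_left _).smul_right _).smul_left _
  rw [hdec, Matrix.exp_add_of_commute _ _ hcomm, exp_smul_one, smul_mul_assoc, one_mul]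

lemma tendsto_pow_mul_exp_neg (j : ℕ) {a : ℝ} (ha : a < 0) :
    Tendsto (fun t : ℝ => t ^ j * Real.exp (a * t)) atTop (nhds 0) := by
  have hb : (0:ℝ) < -a := by linarith
  have h1 : Tendsto (fun t : ℝ => (-a) * t) atTop atTop :=
    Tendsto.const_mul_atTop hb tendsto_id
  have h2 : Tendsto (fun x : ℝ => ((-a)⁻¹) ^ j * (x ^ j * Real.exp (-x))) atTop (nhds 0) := by
    simpa using (Real.tendsto_pow_mul_exp_neg_atTop_nhds_zero j).const_mul (((-a)⁻¹) ^ j)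
  have h3 := h2.comp h1
  have ha' : (-a) ≠ 0 := by linarith
  convert h3 using 1
  funext t
  simp only [Function.comp_apply]
  rw [show -(-a * t) = a * t by ring, mul_pow (-a) t j]
  rw [← mul_assoc, ← mul_assoc, ← mul_pow, inv_mul_cancel₀ ha', one_pow, one_mul]


lemma tendsto_exp_smul_mulVec_of_spectrum_lt {M : Matrix ι ι ℂ}
    (hM : ∀ μ ∈ spectrum ℂ M, μ.re < 0) (v : ι → ℂ) :
    Tendsto (fun t : ℝ => exp ((t : ℂ) • M) *ᵥ v) atTop (nhds 0) := by
  set f : Module.End ℂ (ι → ℂ) := Matrix.toLinAlgEquiv' M with hf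
  have htop : ⨆ μ : ℂ, f.maxGenEigenspace μ = ⊤ :=
    Module.End.iSup_maxGenEigenspace_eq_top f
  have hv : v ∈ ⨆ μ : ℂ, f.maxGenEigenspace μ := htop ▸ Submodule.mem_top
  refine Submodule.iSup_induction (motive := fun z =>
      Tendsto (fun t : ℝ => exp ((t : ℂ) • M) *ᵥ z) atTop (nhds 0)) _ hv ?_ ?_ ?_
  · -- generalized eigenvector case
    intro μ z hz
    rcases eq_or_ne z 0 with rfl | hz0
    · simpa using tendsto_const_nhds
    obtain ⟨k, hk⟩ := (Module.End.mem_maxGenEigenspace f μ z).mp hz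
    -- μ is in the spectrum
    have hμ : μ ∈ spectrum ℂ M := by
      rw [← AlgEquiv.spectrum_eq Matrix.toLinAlgEquiv' M, spectrum.mem_iff]
      intro hU
      rw [Algebra.algebraMap_eq_smul_one] at hU
      have hU' : IsUnit (f - μ • (1 : Module.End ℂ (ι → ℂ))) := by
        have := hU.neg
        rwa [neg_sub] at this
      have hbij : Function.Bijective (f - μ • (1 : Module.End ℂ (ι → ℂ))) :=
        Module.End.isUnit_iff _ |>.mp hU'
      have hinj : Function.Injective ((f - μ • (1 : Module.End ℂ (ι → ℂ))) ^ k) := by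
        rw [Module.End.coe_pow]
        exact Function.Injective.iterate hbij.injective k
      exact hz0 (hinj (by simpa using hk))
    have hre : μ.re < 0 := hM μ hμ
    -- convert hk to matrix form
    have hkM : ((M - μ • (1 : Matrix ι ι ℂ)) ^ k) *ᵥ z = 0 := by
      have h2 : (Matrix.toLinAlgEquiv' ((M - μ • (1 : Matrix ι ι ℂ)) ^ k)) z = 0 := by
        simp only [map_pow, map_sub, _root_.map_smul, _root_.map_one]
        exact hk
      rwa [Matrix.toLinAlgEquiv'_apply] at h2
    have heq : (fun t : ℝ => exp ((t : ℂ) • M) *ᵥ z)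
        = fun t : ℝ => ∑ j ∈ Finset.range k,
            (Complex.exp ((t : ℂ) * μ) * ((j.factorial : ℂ)⁻¹ * (t : ℂ) ^ j)) •
              ((M - μ • (1 : Matrix ι ι ℂ)) ^ j *ᵥ z) := by
      funext t
      rw [exp_smul_shift M μ (t : ℂ), smul_mulVec, exp_smul_mulVec_trunc hkM (t : ℂ),
        Finset.smul_sum]
      exact Finset.sum_congr rfl fun j _ => (smul_smul _ _ _)
    rw [heq]
    have h0 : (0 : ι → ℂ) = ∑ j ∈ Finset.range k, (0 : ι → ℂ) := by simp
    rw [h0]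
    refine tendsto_finset_sum _ fun j _ => ?_
    have hsc : Tendsto (fun t : ℝ =>
        Complex.exp ((t : ℂ) * μ) * ((j.factorial : ℂ)⁻¹ * (t : ℂ) ^ j)) atTop (nhds 0) := by
      have hg : Tendsto (fun t : ℝ =>
          ((j.factorial : ℝ)⁻¹) * (t ^ j * Real.exp (μ.re * t))) atTop (nhds 0) := by
        have := (tendsto_pow_mul_exp_neg j hre).const_mul ((j.factorial : ℝ)⁻¹)
        simpa [mul_comm] using this
      apply squeeze_zero_norm' _ hg
      · filter_upwards [eventually_ge_atTop (0 : ℝ)] with t ht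
        have h1 : ‖Complex.exp ((t : ℂ) * μ)‖ = Real.exp (μ.re * t) := by
          rw [Complex.norm_exp]
          congr 1
          simp [Complex.mul_re, mul_comm]
        have h2 : ‖((j.factorial : ℂ)⁻¹ * (t : ℂ) ^ j)‖ = (j.factorial : ℝ)⁻¹ * t ^ j := by
          rw [norm_mul, norm_inv, norm_pow]
          simp [abs_of_nonneg ht]
        rw [norm_mul, h1, h2]
        exact le_of_eq (by ring)
    have := hsc.smul_const ((M - μ • (1 : Matrix ι ι ℂ)) ^ j *ᵥ z)
    simpa using this
  · simp
  · intro a b ha hb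
    have := ha.add hb
    simp only [add_zero] at this
    convert this using 2 with t
    simp [Matrix.mulVec_add]

open scoped Matrix.Norms.Operator in
noncomputable def mapCLM : Matrix ι ι ℝ →L[ℝ] Matrix ι ι ℂ := by
  letI : SeminormedRing (Matrix ι ι ℝ) := Matrix.linftyOpSemiNormedRing
  letI : NormedRing (Matrix ι ι ℝ) := Matrix.linftyOpNormedRing
  letI : NormedAlgebra ℝ (Matrix ι ι ℝ) := Matrix.linftyOpNormedAlgebra
  exact LinearMap.toContinuousLinearMap
    { toFun := fun Y => Y.map Complex.ofReal
      map_add' := fun Y Z => by ext a b; simp [Matrix.map_apply]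
      map_smul' := fun c Y => by ext a b; simp [Matrix.map_apply] }

open scoped Matrix.Norms.Operator in
lemma exp_map_ofReal (X : Matrix ι ι ℝ) :
    (exp X).map Complex.ofReal = exp (X.map Complex.ofReal) := by
  letI : SeminormedRing (Matrix ι ι ℝ) := Matrix.linftyOpSemiNormedRing
  letI : NormedRing (Matrix ι ι ℝ) := Matrix.linftyOpNormedRing
  letI : NormedAlgebra ℝ (Matrix ι ι ℝ) := Matrix.linftyOpNormedAlgebra
  have hs : Summable (fun k : ℕ => ((k.factorial : ℝ)⁻¹) • X ^ k) :=
    expSeries_summable' (𝕂 := ℝ) X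
  have h1 : (exp X).map Complex.ofReal = mapCLM (exp X) := rfl
  rw [h1, exp_eq_tsum (𝕂 := ℝ), ContinuousLinearMap.map_tsum _ hs, exp_eq_tsum (𝕂 := ℂ)]
  apply tsum_congr
  intro k
  ext a b
  simp [mapCLM, Matrix.map_apply, Matrix.smul_apply,
    show ∀ Y : Matrix ι ι ℝ, (Y ^ k).map Complex.ofReal = (Y.map Complex.ofReal) ^ k from
      fun Y => RingHom.map_pow (Complex.ofRealHom.mapMatrix) Y k]

lemma map_ofReal_mulVec (X : Matrix ι ι ℝ) (v : ι → ℝ) (i : ι) :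
    ((X.map Complex.ofReal) *ᵥ (fun j => (v j : ℂ))) i = ((X *ᵥ v) i : ℂ) := by
  simp [Matrix.mulVec, dotProduct, Matrix.map_apply]

lemma tendsto_exp_smul_mulVec_real {M : Matrix ι ι ℝ}
    (hM : ∀ μ ∈ spectrum ℂ (M.map Complex.ofReal), μ.re < 0) (v : ι → ℝ) :
    Tendsto (fun t : ℝ => exp (t • M) *ᵥ v) atTop (nhds 0) := by
  have hc := tendsto_exp_smul_mulVec_of_spectrum_lt hM (fun j => (v j : ℂ))
  rw [tendsto_pi_nhds]
  intro i
  have heq : ∀ t : ℝ, (((exp (t • M) *ᵥ v) i : ℂ))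
      = (exp ((t : ℂ) • M.map Complex.ofReal) *ᵥ (fun j => (v j : ℂ))) i := by
    intro t
    have h1 : ((t : ℂ) • M.map Complex.ofReal) = (t • M).map Complex.ofReal := by
      ext a b
      simp [Matrix.map_apply]
    rw [h1, ← exp_map_ofReal, map_ofReal_mulVec]
  have : Tendsto (fun t : ℝ => ((exp (t • M) *ᵥ v) i : ℂ)) atTop (nhds 0) := by
    simp_rw [heq]
    have := (tendsto_pi_nhds.mp hc) i
    simpa using this
  have hre := (Complex.continuous_re.tendsto 0).comp this
  simpa [Function.comp_def] using hre

lemma exists_eigenvector_of_mem_spectrum {𝕜 : Type*} [Field 𝕜] {M : Matrix ι ι 𝕜} {μ : 𝕜}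
    (hμ : μ ∈ spectrum 𝕜 M) : ∃ v : ι → 𝕜, v ≠ 0 ∧ M *ᵥ v = μ • v := by
  rw [spectrum.mem_iff, Algebra.algebraMap_eq_smul_one] at hμ
  rw [Matrix.isUnit_iff_isUnit_det, isUnit_iff_ne_zero, not_not] at hμ
  obtain ⟨v, hv0, hv⟩ := (Matrix.exists_mulVec_eq_zero_iff).mpr hμ
  refine ⟨v, hv0, ?_⟩
  rw [Matrix.sub_mulVec, smul_mulVec, Matrix.one_mulVec, sub_eq_zero] at hv
  exact hv.symm

lemma mem_spectrum_of_eigenvector {𝕜 : Type*} [Field 𝕜] {M : Matrix ι ι 𝕜} {μ : 𝕜}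
    {v : ι → 𝕜} (hv0 : v ≠ 0) (hv : M *ᵥ v = μ • v) : μ ∈ spectrum 𝕜 M := by
  rw [spectrum.mem_iff, Algebra.algebraMap_eq_smul_one, Matrix.isUnit_iff_isUnit_det,
    isUnit_iff_ne_zero, not_not]
  rw [← Matrix.exists_mulVec_eq_zero_iff]
  refine ⟨v, hv0, ?_⟩
  rw [Matrix.sub_mulVec, smul_mulVec, Matrix.one_mulVec, hv, sub_self]

section Kron
variable {a b : Type*} [Fintype a] [DecidableEq a] [Fintype b] [DecidableEq b]

lemma kron_mulVec {R : Type*} [CommRing R] (X : Matrix a a R) (Y : Matrix b b R)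
    (u : a → R) (z : b → R) :
    (X ⊗ₖ Y) *ᵥ (fun p : a × b => u p.1 * z p.2)
      = fun p : a × b => (X *ᵥ u) p.1 * (Y *ᵥ z) p.2 := by
  funext ⟨i, k⟩
  simp only [Matrix.mulVec, dotProduct, Matrix.kroneckerMap_apply,
    Fintype.sum_prod_type, Finset.sum_mul_sum]
  refine Finset.sum_congr rfl fun q _ => Finset.sum_congr rfl fun l _ => by ring

lemma kron_structure {R : Type*} [CommRing R] {n ℓ : ℕ}
    (A : Matrix (Fin ℓ) (Fin ℓ) R) (BC : Matrix (Fin ℓ) (Fin ℓ) R)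
    (L : Matrix (Fin n) (Fin n) R) {u : Fin n → R} {lam : R}
    (hu : L *ᵥ u = lam • u) (z : Fin ℓ → R) :
    ((1 : Matrix (Fin n) (Fin n) R) ⊗ₖ A - L ⊗ₖ BC) *ᵥ (fun p : Fin n × Fin ℓ => u p.1 * z p.2)
      = fun p : Fin n × Fin ℓ => u p.1 * ((A - lam • BC) *ᵥ z) p.2 := by
  rw [Matrix.sub_mulVec, kron_mulVec, kron_mulVec, hu]
  funext ⟨i, k⟩
  simp only [Matrix.one_mulVec, Pi.sub_apply, Matrix.sub_mulVec, smul_mulVec,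
    Pi.smul_apply, smul_eq_mul]
  ring

lemma exp_kron_mulVec (Mbig : Matrix (a × b) (a × b) ℝ) (N : Matrix b b ℝ) (u : a → ℝ)
    (h : ∀ z : b → ℝ, Mbig *ᵥ (fun p : a × b => u p.1 * z p.2)
        = fun p : a × b => u p.1 * (N *ᵥ z) p.2)
    (z : b → ℝ) :
    exp Mbig *ᵥ (fun p : a × b => u p.1 * z p.2)
      = fun p : a × b => u p.1 * ((exp N) *ᵥ z) p.2 := by
  have hpow : ∀ k : ℕ, ∀ z : b → ℝ, Mbig ^ k *ᵥ (fun p : a × b => u p.1 * z p.2)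
      = fun p : a × b => u p.1 * (N ^ k *ᵥ z) p.2 := by
    intro k
    induction k with
    | zero => intro z; simp
    | succ k ih =>
      intro z
      rw [pow_succ, ← Matrix.mulVec_mulVec, h z, ih (N *ᵥ z)]
      funext p
      rw [Matrix.mulVec_mulVec, ← pow_succ]
  -- the "tensor with u" continuous linear map
  let g : (b → ℝ) →L[ℝ] (a × b → ℝ) := LinearMap.toContinuousLinearMap
    { toFun := fun y => fun p : a × b => u p.1 * y p.2
      map_add' := fun y y' => by funext p; simp; ring
      map_smul' := fun c y => by funext p; simp; ring }
  have hsum := summable_exp_series_mulVec ℝ N z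
  have h1 : exp Mbig *ᵥ (fun p : a × b => u p.1 * z p.2)
      = ∑' k : ℕ, ((k.factorial : ℝ)⁻¹) • (Mbig ^ k *ᵥ (fun p : a × b => u p.1 * z p.2)) :=
    exp_mulVec_eq_tsum ℝ Mbig _
  rw [h1]
  have h2 : ∀ k : ℕ, ((k.factorial : ℝ)⁻¹) • (Mbig ^ k *ᵥ (fun p : a × b => u p.1 * z p.2))
      = g (((k.factorial : ℝ)⁻¹) • (N ^ k *ᵥ z)) := by
    intro k
    rw [hpow k z]
    funext p
    simp [g]
  simp_rw [h2]
  rw [← ContinuousLinearMap.map_tsum _ hsum, ← exp_mulVec_eq_tsum ℝ N z]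
  rfl

end Kron


/-- The diffusively coupled network `ẋ = (I_n ⊗ A − L ⊗ BC)x` achieves synchronization
(all pairwise differences of agent states tend to zero for every initial condition)
iff `A − λ BC` is Hurwitz for every nonzero eigenvalue `λ` of the connected undirected
graph Laplacian `L`. -/
theorem network_synchronization_iff {n ℓ mm : ℕ}
    (A : Matrix (Fin ℓ) (Fin ℓ) ℝ)
    (B : Matrix (Fin ℓ) (Fin mm) ℝ) (C : Matrix (Fin mm) (Fin ℓ) ℝ)
    (L : Matrix (Fin n) (Fin n) ℝ)
    (hLpsd : L.PosSemidef)
    (hLker : LinearMap.ker L.mulVecLin = Submodule.span ℝ {fun _ => (1 : ℝ)}) :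
    (∀ x0 : Fin n × Fin ℓ → ℝ, ∀ i j : Fin n, ∀ k : Fin ℓ,
      Tendsto (fun t : ℝ =>
          (exp (t • ((1 : Matrix (Fin n) (Fin n) ℝ) ⊗ₖ A - L ⊗ₖ (B * C)))).mulVec x0 (i, k)
        - (exp (t • ((1 : Matrix (Fin n) (Fin n) ℝ) ⊗ₖ A - L ⊗ₖ (B * C)))).mulVec x0 (j, k))
        atTop (nhds 0)) ↔
    (∀ lam : ℝ, lam ∈ spectrum ℝ L → lam ≠ 0 →
      ∀ μ ∈ spectrum ℂ ((A - lam • (B * C)).map Complex.ofReal), μ.re < 0) := by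
  have hL : L.IsHermitian := hLpsd.1
  set Mbig : Matrix (Fin n × Fin ℓ) (Fin n × Fin ℓ) ℝ :=
    (1 : Matrix (Fin n) (Fin n) ℝ) ⊗ₖ A - L ⊗ₖ (B * C) with hMbig
  have hLone : L *ᵥ (fun _ => (1 : ℝ)) = 0 := by
    have h1 : (fun _ => (1 : ℝ) : Fin n → ℝ) ∈ Submodule.span ℝ {(fun _ => (1 : ℝ) : Fin n → ℝ)} :=
      Submodule.mem_span_singleton_self _
    rw [← hLker, LinearMap.mem_ker] at h1
    simpa [Matrix.mulVecLin_apply] using h1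
  have hsymm : ∀ i q : Fin n, L q i = L i q := by
    intro i q
    conv_lhs => rw [← hL]
    simp [Matrix.conjTranspose_apply]
  constructor
  · -- synchronization implies Hurwitz
    intro hsync lam hlam hlam0 μ hμ
    by_contra hre
    push_neg at hre
    obtain ⟨w, hw0, hw⟩ := exists_eigenvector_of_mem_spectrum hlam
    obtain ⟨v, hv0, hv⟩ := exists_eigenvector_of_mem_spectrum hμ
    obtain ⟨k, hk⟩ := Function.ne_iff.mp hv0
    -- w is not constant
    have hsum0 : ∑ q, w q = 0 := by
      have h1 : ∑ i, (L *ᵥ w) i = lam * ∑ i, w i := by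
        rw [hw]; simp [Finset.mul_sum]
      have h2 : ∑ i, (L *ᵥ w) i = 0 := by
        simp only [Matrix.mulVec, dotProduct]
        rw [Finset.sum_comm]
        refine Finset.sum_eq_zero fun q _ => ?_
        rw [← Finset.sum_mul]
        have h3 : ∑ i, L i q = 0 := by
          have := congrFun hLone q
          simpa [Matrix.mulVec, dotProduct, hsymm] using this
        rw [h3, zero_mul]
      rw [h2] at h1
      exact (mul_eq_zero.mp h1.symm).resolve_left hlam0
    have hneq : ∃ i j : Fin n, w i ≠ w j := by
      by_contra hcon
      push_neg at hcon
      obtain ⟨q0, hq0⟩ := Function.ne_iff.mp hw0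
      apply hq0
      have hall : ∀ q, w q = w q0 := fun q => hcon q q0
      have : ∑ q, w q = (Fintype.card (Fin n) : ℝ) * w q0 := by
        rw [Finset.sum_congr rfl fun q _ => hall q]
        simp [Finset.sum_const, mul_comm]
      rw [hsum0] at this
      have hcard : 0 < (Fintype.card (Fin n) : ℝ) := by
        simp only [Fintype.card_fin]
        exact_mod_cast Fin.pos q0
      have := (mul_eq_zero.mp this.symm).resolve_left (ne_of_gt hcard)
      simpa using this
    obtain ⟨i, j, hij⟩ := hneq
    -- complex eigenvector of the big matrix
    set Mc : Matrix (Fin n × Fin ℓ) (Fin n × Fin ℓ) ℂ := Mbig.map Complex.ofReal with hMc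
    set wc : Fin n → ℂ := fun q => (w q : ℂ) with hwcdef
    set z0 : Fin n × Fin ℓ → ℂ := fun p => wc p.1 * v p.2 with hz0def
    have hmc : Mc = (1 : Matrix (Fin n) (Fin n) ℂ) ⊗ₖ (A.map Complex.ofReal)
        - (L.map Complex.ofReal) ⊗ₖ ((B * C).map Complex.ofReal) := by
      ext ⟨p1, p2⟩ ⟨q1, q2⟩
      simp only [hMc, hMbig, Matrix.map_apply, Matrix.sub_apply, Matrix.kroneckerMap_apply,
        Matrix.one_apply]
      push_cast
      split <;> simp
    have hwc : (L.map Complex.ofReal) *ᵥ wc = (lam : ℂ) • wc := by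
      funext q
      rw [map_ofReal_mulVec L w q, hw]
      simp [hwcdef]
    have hvc : ((A.map Complex.ofReal) - (lam : ℂ) • ((B * C).map Complex.ofReal)) *ᵥ v
        = μ • v := by
      have heqm : ((A.map Complex.ofReal) - (lam : ℂ) • ((B * C).map Complex.ofReal))
          = (A - lam • (B * C)).map Complex.ofReal := by
        ext a b
        simp [Matrix.map_apply, Matrix.sub_apply, Matrix.smul_apply]
      rw [heqm, hv]
    have heig : Mc *ᵥ z0 = μ • z0 := by
      rw [hmc, hz0def]
      rw [kron_structure (A.map Complex.ofReal) ((B * C).map Complex.ofReal)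
        (L.map Complex.ofReal) hwc v]
      funext p
      rw [hvc]
      simp [mul_comm, mul_left_comm]
    have hexp : ∀ t : ℝ, exp ((t : ℂ) • Mc) *ᵥ z0 = Complex.exp ((t : ℂ) * μ) • z0 :=
      fun t => exp_smul_mulVec_eigen heig (t : ℂ)
    -- real and imaginary initial conditions
    set xr : Fin n × Fin ℓ → ℝ := fun p => w p.1 * (v p.2).re with hxrdef
    set xi : Fin n × Fin ℓ → ℝ := fun p => w p.1 * (v p.2).im with hxidef
    have hsplit : ∀ t : ℝ, ∀ p : Fin n × Fin ℓ,
        (exp ((t : ℂ) • Mc) *ᵥ z0) p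
          = ((exp (t • Mbig) *ᵥ xr) p : ℂ) + Complex.I * ((exp (t • Mbig) *ᵥ xi) p : ℂ) := by
      intro t p
      have hmap : (t : ℂ) • Mc = (t • Mbig).map Complex.ofReal := by
        ext a b
        simp [hMc, Matrix.map_apply]
      have hz0split : z0 = (fun p => ((xr p : ℂ))) + Complex.I • (fun p => ((xi p : ℂ))) := by
        funext p
        simp only [hz0def, hxrdef, hxidef, hwcdef, Pi.add_apply, Pi.smul_apply, smul_eq_mul]
        push_cast
        rw [← Complex.re_add_im (v p.2)]
        push_cast
        ring_nf
        simp [Complex.ext_iff]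
      rw [hmap, ← exp_map_ofReal, hz0split, Matrix.mulVec_add, Matrix.mulVec_smul]
      simp only [Pi.add_apply, Pi.smul_apply, smul_eq_mul]
      rw [map_ofReal_mulVec, map_ofReal_mulVec]
    -- the complex difference tends to zero by synchronization
    set D : ℝ → ℂ := fun t => Complex.exp ((t : ℂ) * μ) * ((wc i - wc j) * v k) with hDdef
    have hDdiff : ∀ t : ℝ,
        D t = (exp ((t : ℂ) • Mc) *ᵥ z0) (i, k) - (exp ((t : ℂ) • Mc) *ᵥ z0) (j, k) := by
      intro t
      rw [hexp t]
      simp only [Pi.smul_apply, smul_eq_mul, hz0def, hDdef]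
      ring
    have hD0 : Tendsto D atTop (nhds 0) := by
      have hr := hsync xr i j k
      have hi2 := hsync xi i j k
      have : Tendsto (fun t : ℝ =>
          (((exp (t • Mbig)).mulVec xr (i, k) - (exp (t • Mbig)).mulVec xr (j, k) : ℝ) : ℂ)
          + Complex.I * (((exp (t • Mbig)).mulVec xi (i, k)
              - (exp (t • Mbig)).mulVec xi (j, k) : ℝ) : ℂ)) atTop (nhds 0) := by
        have h1 := (Complex.continuous_ofReal.tendsto 0).comp hr
        have h2 := (Complex.continuous_ofReal.tendsto 0).comp hi2
        have h3 := h1.add (h2.const_mul Complex.I)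
        simpa [Function.comp] using h3
      refine Tendsto.congr (fun t => ?_) this
      rw [hDdiff t, hsplit t (i, k), hsplit t (j, k)]
      push_cast
      ring
    -- but |D t| is bounded below
    have hck : ((wc i - wc j) * v k) ≠ 0 := by
      apply mul_ne_zero
      · simp only [hwcdef, sub_ne_zero]
        exact_mod_cast hij
      · exact hk
    have hcpos : 0 < ‖(wc i - wc j) * v k‖ := norm_pos_iff.mpr hck
    have hlower : ∀ᶠ t : ℝ in atTop, ‖(wc i - wc j) * v k‖ ≤ ‖D t‖ := by
      filter_upwards [eventually_ge_atTop (0 : ℝ)] with t ht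
      have hnorm : ‖D t‖ = Real.exp (t * μ.re) * ‖(wc i - wc j) * v k‖ := by
        rw [hDdef]
        simp only [norm_mul]
        congr 1
        rw [Complex.norm_exp]
        congr 1
        simp [Complex.mul_re]
      rw [hnorm]
      nth_rewrite 1 [show ‖(wc i - wc j) * v k‖ = 1 * ‖(wc i - wc j) * v k‖ by ring]
      gcongr
      exact Real.one_le_exp (mul_nonneg ht hre)
    have hupper : ∀ᶠ t : ℝ in atTop, ‖D t‖ < ‖(wc i - wc j) * v k‖ := by
      have := hD0.norm
      simp only [norm_zero] at this
      exact this.eventually_lt_const hcpos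
    obtain ⟨t, h1, h2⟩ := (hlower.and hupper).exists
    exact absurd (h1.trans_lt h2) (lt_irrefl _)
  · -- Hurwitz implies synchronization
    intro hH x0 i j k
    set U : Fin n → Fin n → ℝ := fun p => ⇑(hL.eigenvectorBasis p) with hUdef
    set d : Fin n → ℝ := fun p => hL.eigenvalues p with hddef
    have heig : ∀ p, L *ᵥ U p = d p • U p := fun p => hL.mulVec_eigenvectorBasis p
    have hUne : ∀ p, U p ≠ 0 := by
      intro p hp
      apply hL.eigenvectorBasis.orthonormal.ne_zero p
      ext q
      exact congrFun hp q
    have hortho : ∀ q q' : Fin n, ∑ p, U p q * U p q' = if q = q' then 1 else 0 := by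
      intro q q'
      have h1 : ((hL.eigenvectorUnitary : Matrix (Fin n) (Fin n) ℝ) *
          star (hL.eigenvectorUnitary : Matrix (Fin n) (Fin n) ℝ)) = 1 :=
        hL.eigenvectorUnitary.prop.2
      have h3 : ((hL.eigenvectorUnitary : Matrix (Fin n) (Fin n) ℝ) *
          star (hL.eigenvectorUnitary : Matrix (Fin n) (Fin n) ℝ)) q q'
          = (1 : Matrix (Fin n) (Fin n) ℝ) q q' := by rw [h1]
      rw [Matrix.mul_apply] at h3
      simp only [Matrix.star_apply, star_trivial, Matrix.one_apply,
        Matrix.IsHermitian.eigenvectorUnitary_apply] at h3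
      simpa [hUdef] using h3
    set z : Fin n → Fin ℓ → ℝ := fun p l => ∑ q, U p q * x0 (q, l) with hzdef
    have hx0 : x0 = ∑ p, (fun pr : Fin n × Fin ℓ => U p pr.1 * z p pr.2) := by
      funext ⟨q, l⟩
      rw [Finset.sum_apply]
      simp only [hzdef]
      rw [Finset.sum_congr rfl (fun p _ => Finset.mul_sum _ _ _)]
      rw [Finset.sum_comm]
      have : ∀ q', ∑ p, U p q * (U p q' * x0 (q', l)) = (if q = q' then 1 else 0) * x0 (q', l) := by
        intro q'
        rw [← hortho q q', Finset.sum_mul]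
        exact Finset.sum_congr rfl fun p _ => by ring
      rw [Finset.sum_congr rfl fun q' _ => this q']
      simp
    have hy : ∀ t : ℝ, exp (t • Mbig) *ᵥ x0
        = fun pr : Fin n × Fin ℓ => ∑ p, U p pr.1
            * ((exp (t • (A - d p • (B * C)))) *ᵥ z p) pr.2 := by
      intro t
      conv_lhs => rw [hx0]
      have hsum : exp (t • Mbig) *ᵥ (∑ p, (fun pr : Fin n × Fin ℓ => U p pr.1 * z p pr.2))
          = ∑ p, exp (t • Mbig) *ᵥ (fun pr : Fin n × Fin ℓ => U p pr.1 * z p pr.2) :=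
        map_sum (Matrix.mulVecLin (exp (t • Mbig))) _ _
      rw [hsum]
      funext pr
      rw [Finset.sum_apply]
      refine Finset.sum_congr rfl fun p _ => ?_
      have hstruct : ∀ z' : Fin ℓ → ℝ, (t • Mbig) *ᵥ (fun pr : Fin n × Fin ℓ => U p pr.1 * z' pr.2)
          = fun pr : Fin n × Fin ℓ => U p pr.1 * ((t • (A - d p • (B * C))) *ᵥ z') pr.2 := by
        intro z'
        rw [smul_mulVec, kron_structure A (B * C) L (heig p) z']
        funext pr'
        simp only [Pi.smul_apply, smul_eq_mul, smul_mulVec]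
        ring
      rw [exp_kron_mulVec (t • Mbig) (t • (A - d p • (B * C))) (U p) hstruct (z p)]
    have hgoal : ∀ t : ℝ, (exp (t • Mbig)).mulVec x0 (i, k) - (exp (t • Mbig)).mulVec x0 (j, k)
        = ∑ p, (U p i - U p j) * ((exp (t • (A - d p • (B * C)))) *ᵥ z p) k := by
      intro t
      show (exp (t • Mbig) *ᵥ x0) (i, k) - (exp (t • Mbig) *ᵥ x0) (j, k) = _
      rw [hy t]
      rw [← Finset.sum_sub_distrib]
      exact Finset.sum_congr rfl fun p _ => by ring
    simp_rw [hgoal]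
    have h0 : (0 : ℝ) = ∑ p : Fin n, (0 : ℝ) := by simp
    rw [h0]
    refine tendsto_finset_sum _ fun p _ => ?_
    rcases eq_or_ne (d p) 0 with hdp | hdp
    · -- zero eigenvalue: eigenvector is constant
      have hker : U p ∈ LinearMap.ker L.mulVecLin := by
        rw [LinearMap.mem_ker, Matrix.mulVecLin_apply, heig p, hdp, zero_smul]
      rw [hLker] at hker
      obtain ⟨c, hc⟩ := Submodule.mem_span_singleton.mp hker
      have hcon : U p i = U p j := by
        rw [← hc]; simp
      simp [hcon, sub_self]
    · -- nonzero eigenvalue: Hurwitz gives decay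
      have hspec : d p ∈ spectrum ℝ L := mem_spectrum_of_eigenvector (hUne p) (heig p)
      have hhur := hH (d p) hspec hdp
      have hdecay := tendsto_exp_smul_mulVec_real hhur (z p)
      have hk := (tendsto_pi_nhds.mp hdecay) k
      have := hk.const_mul (U p i - U p j)
      simpa using this
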